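/- Let ⋆ be a (semi)star operation on an integral domain D, i.e. a semistar operation with D^⋆ = D. If D is a ⋆-domain, then D is a v-domain and ⋆_f = t. -/
import Mathlib


open Submodule

namespace Semistar

/-- A semistar operation on an integral domain `D` with quotient field `K`:
a map on `D`-submodules of `K` satisfying the semistar axioms on nonzero submodules. -/
structure SemistarOp (D K : Type*) [CommRing D] [Field K] [Algebra D K] where
  star : Submodule D K → Submodule D K
  star_smul_mul : ∀ x : K, x ≠ 0 → ∀ E : Submodule D K, E ≠ ⊥ →
    star (span D {x} * E) = span D {x} * star E
  star_mono : ∀ E F : Submodule D K, E ≠ ⊥ → F ≠ ⊥ → E ≤ F → star E ≤ star F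
  le_star : ∀ E : Submodule D K, E ≠ ⊥ → E ≤ star E
  star_star : ∀ E : Submodule D K, E ≠ ⊥ → star (star E) = star E

variable {D K : Type*} [CommRing D] [Field K] [Algebra D K]

/-- The finite-type semistar operation `⋆_f` associated to `⋆`. -/
def finStar (t : Submodule D K → Submodule D K) : Submodule D K → Submodule D K :=
  fun E => ⨆ F ∈ {F : Submodule D K | F ≠ ⊥ ∧ F.FG ∧ F ≤ E}, t F

/-- The image in `K` of an ideal of `D`. -/
def idealToK (I : Ideal D) : Submodule D K :=
  Submodule.map (Algebra.linearMap D K) I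

/-- `I` is a quasi-`⋆`-ideal: a nonzero ideal of `D` with `I^⋆ ∩ D = I`. -/
def IsQuasiIdeal (t : Submodule D K → Submodule D K) (I : Ideal D) : Prop :=
  I ≠ ⊥ ∧ t (idealToK I) ⊓ 1 = idealToK I

/-- `M` is a quasi-`⋆`-maximal ideal: maximal among quasi-`⋆`-ideals. -/
def IsQuasiMaximal (t : Submodule D K → Submodule D K) (M : Ideal D) : Prop :=
  IsQuasiIdeal t M ∧ ∀ J : Ideal D, IsQuasiIdeal t J → M ≤ J → M = J

/-- The localization `E·D_M` of a submodule `E` of `K` at (the complement of) an ideal `M`. -/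
def locAt (M : Ideal D) (E : Submodule D K) : Submodule D K where
  carrier := {x : K | ∃ s ∈ Submonoid.closure ((M : Set D)ᶜ), s • x ∈ E}
  add_mem' := by
    rintro x y ⟨s, hs, hsx⟩ ⟨t, ht, hty⟩
    refine ⟨s * t, mul_mem hs ht, ?_⟩
    have h1 : (s * t) • x ∈ E := by rw [mul_comm, mul_smul]; exact E.smul_mem t hsx
    have h2 : (s * t) • y ∈ E := by rw [mul_smul]; exact E.smul_mem s hty
    rw [smul_add]; exact E.add_mem h1 h2
  zero_mem' := ⟨1, Submonoid.one_mem _, by simp⟩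
  smul_mem' := by
    rintro c x ⟨s, hs, hsx⟩
    exact ⟨s, hs, by rw [smul_comm]; exact E.smul_mem c hsx⟩

/-- The spectral semistar operation `⋆̃` associated to `⋆`, defined by
`E^⋆̃ = ⋂ { E·D_M : M quasi-`⋆_f`-maximal }`. -/
def tildeStar (s : SemistarOp D K) : Submodule D K → Submodule D K :=
  fun E => ⨅ M ∈ {M : Ideal D | IsQuasiMaximal (finStar s.star) M}, locAt M E

/-- The localizing system `F^⋆` of ideals `I` with `I^⋆ = D^⋆`. -/
def starLS (s : SemistarOp D K) : Set (Ideal D) :=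
  {I : Ideal D | I ≠ ⊥ ∧ s.star (idealToK I) = s.star 1}

/-- The stable semistar operation `⋆̄` associated to `⋆`:
`E^⋆̄ = ⋃ {(E : J) : J ∈ F^⋆}`. -/
def barStar (s : SemistarOp D K) : Submodule D K → Submodule D K :=
  fun E => ⨆ J ∈ starLS s, E / idealToK J

/-- `I` is `⋆`-invertible: `(I·I⁻¹)^⋆ = D^⋆`. -/
def IsStarInvertible (t : Submodule D K → Submodule D K) (I : Submodule D K) : Prop :=
  t (I * (1 / I)) = t 1

/-- `D` is a `⋆`-domain: every nonzero finitely generated `D`-submodule of `K`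
is `⋆`-invertible. -/
def IsStarDomain (t : Submodule D K → Submodule D K) : Prop :=
  ∀ I : Submodule D K, I ≠ ⊥ → I.FG → IsStarInvertible t I

/-- `D` is a Prüfer `⋆`-multiplication domain: every nonzero finitely generated
ideal of `D` is `⋆_f`-invertible. -/
def IsPMD (t : Submodule D K → Submodule D K) : Prop :=
  ∀ I : Submodule D K, I ≠ ⊥ → I.FG → I ≤ 1 → IsStarInvertible (finStar t) I

/-- `D` is a P⋆MD for the semistar operation `s`. -/
abbrev IsPStarMD (s : SemistarOp D K) : Prop := IsPMD s.star

/-- Equality of two semistar operations (as maps on nonzero submodules):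
`D` is a `(∗₁, ∗₂)`-domain. -/
def StarEq (t₁ t₂ : Submodule D K → Submodule D K) : Prop :=
  ∀ E : Submodule D K, E ≠ ⊥ → t₁ E = t₂ E

/-- `⋆` is a.b. -/
def IsAB (t : Submodule D K → Submodule D K) : Prop :=
  ∀ E : Submodule D K, E ≠ ⊥ → E.FG → ∀ F G : Submodule D K, F ≠ ⊥ → G ≠ ⊥ →
    t (E * F) ≤ t (E * G) → t F ≤ t G

/-- `⋆` is e.a.b. -/
def IsEAB (t : Submodule D K → Submodule D K) : Prop :=
  ∀ E F G : Submodule D K, E ≠ ⊥ → E.FG → F ≠ ⊥ → F.FG → G ≠ ⊥ → G.FG →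
    t (E * F) ≤ t (E * G) → t F ≤ t G

/-- `D` is quasi-`⋆`-integrally closed: `D^⋆ = ⋃ {(F^⋆ : F^⋆) : F ∈ f(D)}`. -/
def IsQuasiStarIntegrallyClosed (t : Submodule D K → Submodule D K) : Prop :=
  (t 1 : Set K) = ⋃ F ∈ {F : Submodule D K | F ≠ ⊥ ∧ F.FG}, ((t F / t F : Submodule D K) : Set K)

/-- The submodule `S` of `K` is integrally closed in `K`. -/
def IsIntegrallyClosedIn (S : Submodule D K) : Prop :=
  ∀ x : K, (∃ p : Polynomial K, p.Monic ∧ (∀ i, p.coeff i ∈ S) ∧ Polynomial.eval x p = 0) → x ∈ S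

/-- `D` is `⋆`-Noetherian: ACC on quasi-`⋆`-ideals. -/
def IsStarNoetherian (t : Submodule D K → Submodule D K) : Prop :=
  ∀ c : ℕ → Ideal D, (∀ n, IsQuasiIdeal t (c n)) → Monotone c →
    ∃ n, ∀ m, n ≤ m → c m = c n

/-- `D` is `⋆`-extracoherent. -/
def IsExtraCoherent (t : Submodule D K → Submodule D K) : Prop :=
  ∀ E F : Submodule D K, E ≠ ⊥ → E.FG → F ≠ ⊥ → F.FG → E ⊓ F ≠ ⊥ →
    ∃ J : Submodule D K, J ≠ ⊥ ∧ J.FG ∧ J ≤ E ⊓ F ∧ t J = t E ⊓ t F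

/-- `D` is truly `⋆`-coherent. -/
def IsTrulyCoherent (t : Submodule D K → Submodule D K) : Prop :=
  ∀ E F : Submodule D K, E ≠ ⊥ → E.FG → F ≠ ⊥ → F.FG → E ⊓ F ≠ ⊥ →
    ∃ J : Submodule D K, J ≠ ⊥ ∧ J.FG ∧ t J = t (E ⊓ F)

/-- `D` is `⋆`-coherent. -/
def IsCoherent (t : Submodule D K → Submodule D K) : Prop :=
  ∀ E F : Submodule D K, E ≠ ⊥ → E.FG → F ≠ ⊥ → F.FG → E ⊓ F ≠ ⊥ →
    ∃ J : Submodule D K, J ≠ ⊥ ∧ J.FG ∧ t J = t E ⊓ t F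

/-- `D` is `⋆`-quasi-coherent. -/
def IsQuasiCoherent (t : Submodule D K → Submodule D K) : Prop :=
  ∀ F : Submodule D K, F ≠ ⊥ → F.FG →
    ∃ G : Submodule D K, G ≠ ⊥ ∧ G.FG ∧ t ((1 : Submodule D K) / F) = t G

/-- `D` is an `H(⋆)`-domain. -/
def IsHDomain (t : Submodule D K → Submodule D K) : Prop :=
  ∀ I : Ideal D, I ≠ ⊥ → t (idealToK I) = t 1 →
    ∃ J : Ideal D, J ≠ ⊥ ∧ J.FG ∧ J ≤ I ∧ t (idealToK J) = t 1

/-- `D` is an `I(⋆)`-domain. -/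
def IsIDomain (s : SemistarOp D K) : Prop :=
  ∀ I : Submodule D K, I ≠ ⊥ → I.FG → I ≤ 1 →
    (IsStarInvertible s.star I ↔ IsStarInvertible (finStar s.star) I)


section VDomain

variable {D K : Type*} [CommRing D] [IsDomain D] [Field K] [Algebra D K] [IsFractionRing D K]

omit [IsDomain D] [IsFractionRing D K] in
lemma mul_ne_bot' {E F : Submodule D K} (hE : E ≠ ⊥) (hF : F ≠ ⊥) : E * F ≠ ⊥ := by
  obtain ⟨x, hx, hx0⟩ := Submodule.exists_mem_ne_zero_of_ne_bot hE
  obtain ⟨y, hy, hy0⟩ := Submodule.exists_mem_ne_zero_of_ne_bot hF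
  intro h
  have : x * y ∈ E * F := Submodule.mul_mem_mul hx hy
  rw [h, Submodule.mem_bot] at this
  exact mul_ne_zero hx0 hy0 this

lemma one_div_ne_bot {I : Submodule D K} (hfg : I.FG) : (1 : Submodule D K) / I ≠ ⊥ := by
  obtain ⟨s, hs⟩ := hfg
  obtain ⟨b, hb⟩ := IsLocalization.exist_integer_multiples_of_finset (nonZeroDivisors D) s
  have hmem : algebraMap D K (b : D) ∈ (1 : Submodule D K) / I := by
    rw [Submodule.mem_div_iff_forall_mul_mem]
    intro y hy
    rw [← hs] at hy
    induction hy using Submodule.span_induction with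
    | mem z hz =>
      obtain ⟨c, hc⟩ := hb z hz
      rw [Algebra.smul_def] at hc
      rw [Submodule.one_eq_range]
      exact ⟨c, hc⟩
    | zero => simp
    | add a b' _ _ ha hb' => rw [mul_add]; exact add_mem ha hb'
    | smul c a _ ha => rw [Algebra.mul_smul_comm]; exact Submodule.smul_mem _ _ ha
  intro h
  rw [h, Submodule.mem_bot] at hmem
  have : (b : D) ≠ 0 := nonZeroDivisors.coe_ne_zero b
  exact this ((injective_iff_map_eq_zero _).mp (IsFractionRing.injective D K) _ hmem)

omit [IsDomain D] [IsFractionRing D K] in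
lemma one_ne_bot' : (1 : Submodule D K) ≠ ⊥ := by
  intro hb
  have h1 : (1 : K) ∈ (1 : Submodule D K) := Submodule.one_le.mp le_rfl
  rw [hb, Submodule.mem_bot] at h1
  exact one_ne_zero h1

omit [IsDomain D] [IsFractionRing D K] in
lemma one_div_one' : (1 : Submodule D K) / 1 = 1 := by
  apply le_antisymm
  · intro x hx
    rw [Submodule.mem_div_iff_forall_mul_mem] at hx
    simpa using hx 1 (Submodule.one_le.mp le_rfl)
  · intro x hx
    rw [Submodule.mem_div_iff_forall_mul_mem]
    intro y hy
    have := Submodule.mul_mem_mul hx hy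
    rwa [one_mul] at this

omit [IsDomain D] [IsFractionRing D K] in
/-- `E^⋆ ≤ E^v` for any semistar operation with `D^⋆ = D`. -/
lemma star_le_v (s : SemistarOp D K) (hsemi : s.star 1 = 1)
    {E : Submodule D K} (hE : E ≠ ⊥) : s.star E ≤ 1 / (1 / E) := by
  intro y hy
  rw [Submodule.mem_div_iff_forall_mul_mem]
  intro x hx
  rcases eq_or_ne x (0 : K) with rfl | hx0
  · simpa using Submodule.zero_mem _
  · have hle : span D {x} * E ≤ 1 := by
      rw [Submodule.mul_le]
      intro m hm n hn
      rw [Submodule.mem_span_singleton] at hm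
      obtain ⟨c, rfl⟩ := hm
      rw [Submodule.mem_div_iff_forall_mul_mem] at hx
      rw [smul_mul_assoc]
      exact Submodule.smul_mem _ _ (hx n hn)
    have hne : span D {x} * E ≠ ⊥ := by
      intro hb
      have : x * (Submodule.exists_mem_ne_zero_of_ne_bot hE).choose ∈ span D {x} * E := by
        exact Submodule.mul_mem_mul (Submodule.mem_span_singleton_self x)
          (Submodule.exists_mem_ne_zero_of_ne_bot hE).choose_spec.1
      rw [hb, Submodule.mem_bot] at this
      exact mul_ne_zero hx0 (Submodule.exists_mem_ne_zero_of_ne_bot hE).choose_spec.2 this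
    have h1 : s.star (span D {x} * E) ≤ 1 := by
      calc s.star (span D {x} * E) ≤ s.star 1 :=
            s.star_mono _ _ hne one_ne_bot' hle
        _ = 1 := hsemi
    have := s.star_smul_mul x hx0 E hE
    have hxy : x * y ∈ span D {x} * s.star E :=
      Submodule.mul_mem_mul (Submodule.mem_span_singleton_self x) hy
    rw [← this] at hxy
    rw [mul_comm]
    exact h1 hxy

/-- `E^v ≤ E^⋆` for nonzero finitely generated `E`, when `D` is a `⋆`-domain. -/
lemma v_le_star (s : SemistarOp D K) (hsemi : s.star 1 = 1) (h : IsStarDomain s.star)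
    {I : Submodule D K} (hI : I ≠ ⊥) (hfg : I.FG) : 1 / (1 / I) ≤ s.star I := by
  have hdiv : (1 : Submodule D K) / I ≠ ⊥ := one_div_ne_bot hfg
  have hJ : I * (1 / I) ≠ ⊥ := mul_ne_bot' hI hdiv
  have hstarJ : s.star (I * (1 / I)) = 1 := by
    rw [h I hI hfg, hsemi]
  intro x hx
  rcases eq_or_ne x (0 : K) with rfl | hx0
  · exact Submodule.zero_mem _
  · have hle : span D {x} * (I * (1 / I)) ≤ I := by
      rw [Submodule.mul_le]
      intro m hm n hn
      rw [Submodule.mem_span_singleton] at hm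
      obtain ⟨c, rfl⟩ := hm
      rw [smul_mul_assoc]
      apply Submodule.smul_mem
      -- n ∈ I * (1/I); show x * n ∈ I
      have : I * (1 / I) ≤ Submodule.comap (LinearMap.mulLeft D x) I := by
        rw [Submodule.mul_le]
        intro i hi z hz
        rw [Submodule.mem_comap]
        have hxz : x * z ∈ (1 : Submodule D K) := by
          rw [Submodule.mem_div_iff_forall_mul_mem] at hx
          exact hx z hz
        have : (x * z) * i ∈ (1 : Submodule D K) * I := Submodule.mul_mem_mul hxz hi
        rw [Submodule.one_mul] at this
        show x * (i * z) ∈ I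
        rw [show x * (i * z) = (x * z) * i by ring]
        exact this
      exact this hn
    have hne : span D {x} * (I * (1 / I)) ≠ ⊥ := by
      apply mul_ne_bot' _ hJ
      simp [Submodule.span_singleton_eq_bot, hx0]
    have key : span D {x} * s.star (I * (1 / I)) ≤ s.star I := by
      rw [← s.star_smul_mul x hx0 _ hJ]
      exact s.star_mono _ _ hne hI hle
    have : x * (1 : K) ∈ span D {x} * s.star (I * (1 / I)) := by
      apply Submodule.mul_mem_mul (Submodule.mem_span_singleton_self x)
      rw [hstarJ]
      exact Submodule.one_le.mp le_rfl
    rw [mul_one] at this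
    exact key this

end VDomain

theorem statement2 {D K : Type*} [CommRing D] [IsDomain D] [Field K] [Algebra D K]
    [IsFractionRing D K] (s : SemistarOp D K)
    (hsemi : s.star 1 = 1) (h : IsStarDomain s.star) :
    IsStarDomain (fun E : Submodule D K => 1 / (1 / E)) ∧
    StarEq (finStar s.star) (finStar (fun E : Submodule D K => 1 / (1 / E))) := by
  have hstar_eq_v : ∀ F : Submodule D K, F ≠ ⊥ → F.FG → s.star F = 1 / (1 / F) := fun F hF hfg =>
    le_antisymm (star_le_v s hsemi hF) (v_le_star s hsemi h hF hfg)
  constructor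
  · intro I hI hfg
    unfold IsStarInvertible
    have hdiv : (1 : Submodule D K) / I ≠ ⊥ := one_div_ne_bot hfg
    have hJ : I * (1 / I) ≠ ⊥ := mul_ne_bot' hI hdiv
    have hstarJ : s.star (I * (1 / I)) = 1 := by rw [h I hI hfg, hsemi]
    have hJle : I * (1 / I) ≤ 1 := by
      rw [Submodule.mul_le]
      intro i hi z hz
      rw [Submodule.mem_div_iff_forall_mul_mem] at hz
      rw [mul_comm]
      exact hz i hi
    have h1 : (1 : Submodule D K) ≤ 1 / (1 / (I * (1 / I))) := by
      have := star_le_v s hsemi hJ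
      rwa [hstarJ] at this
    have h2 : (1 : Submodule D K) / (1 / (I * (1 / I))) ≤ 1 := by
      have hmono : (1 : Submodule D K) / 1 ≤ 1 / (I * (1 / I)) := by
        intro x hx
        rw [Submodule.mem_div_iff_forall_mul_mem] at hx ⊢
        exact fun y hy => hx y (hJle hy)
      rw [one_div_one'] at hmono
      intro x hx
      rw [Submodule.mem_div_iff_forall_mul_mem] at hx
      have := hx 1 (hmono (Submodule.one_le.mp le_rfl))
      rwa [mul_one] at this
    simp only
    rw [le_antisymm h2 h1, one_div_one', one_div_one']
  · intro E _
    unfold finStar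
    apply iSup_congr
    intro F
    apply iSup_congr
    rintro ⟨hF, hfg, -⟩
    exact hstar_eq_v F hF hfg

end Semistar
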